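/- Let ℓ_μ ∈ (0,∞), ℓ_σ ∈ [0, ℓ_μ/2] and assume σ : ℝ → ℝ satisfies condition (A3): there exists c ∈ (0,∞) such that for all x, y ∈ ℝ, |σ(x)−σ(y)| ≤ c·(1+|x|^{ℓ_σ}+|y|^{ℓ_σ})·|x−y|. Then there exists c' ∈ (0,∞) such that for all n ∈ ℕ with n ≥ 1 and all x, y ∈ ℝ, |σ_n(x) − σ_n(y)| ≤ c'·(1 + |x|^{ℓ_σ} + |y|^{ℓ_σ})·(n^{−1/2} + |x − y|). -/

import Mathlib

/-- The tamed coefficient `f_n(x) = f(x) / (1 + n^{-1/2} |x|^ℓ)`. -/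
noncomputable def tame (f : ℝ → ℝ) (ℓ : ℝ) (n : ℕ) (x : ℝ) : ℝ :=
  f x / (1 + (1 / Real.sqrt (n : ℝ)) * |x| ^ ℓ)

open Real

lemma rpow_sub_rpow_le {ℓ a b : ℝ} (hℓ : 0 < ℓ) (hb : 0 < b) (hab : b ≤ a) :
    a ^ ℓ - b ^ ℓ ≤ ℓ * a ^ ℓ * ((a - b) / b) := by
  have ha : 0 < a := hb.trans_le hab
  have hba : (0:ℝ) < b / a := div_pos hb ha
  have h1 : b ^ ℓ = a ^ ℓ * (b / a) ^ ℓ := by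
    rw [← Real.mul_rpow ha.le (div_nonneg hb.le ha.le), mul_div_cancel₀ _ (ne_of_gt ha)]
  have h3 : Real.log (b / a) * ℓ + 1 ≤ (b / a) ^ ℓ := by
    rw [Real.rpow_def_of_pos hba ℓ]; exact Real.add_one_le_exp _
  have h4 : Real.log (a / b) ≤ (a - b) / b := by
    have h := Real.log_le_sub_one_of_pos (div_pos ha hb)
    have : a / b - 1 = (a - b) / b := by field_simp
    linarith
  have h5 : Real.log (b / a) = - Real.log (a / b) := by
    rw [← Real.log_inv, inv_div]
  have hA : 0 ≤ a ^ ℓ := Real.rpow_nonneg ha.le ℓ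
  calc a ^ ℓ - b ^ ℓ = a ^ ℓ * (1 - (b / a) ^ ℓ) := by rw [h1]; ring
    _ ≤ a ^ ℓ * (Real.log (a / b) * ℓ) := by
        apply mul_le_mul_of_nonneg_left _ hA
        rw [h5] at h3; linarith
    _ ≤ a ^ ℓ * ((a - b) / b * ℓ) := by
        apply mul_le_mul_of_nonneg_left _ hA
        exact mul_le_mul_of_nonneg_right h4 hℓ.le
    _ = ℓ * a ^ ℓ * ((a - b) / b) := by ring

lemma inv_diff_le {ℓ s a b : ℝ} (hℓ : 0 < ℓ) (hs : 0 ≤ s) (hb : 0 < b) (hab : b ≤ a) :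
    (1 + s * b ^ ℓ)⁻¹ - (1 + s * a ^ ℓ)⁻¹ ≤ ℓ * ((a - b) / b) := by
  have ha : 0 < a := hb.trans_le hab
  have hA : 0 ≤ s * a ^ ℓ := mul_nonneg hs (Real.rpow_nonneg ha.le ℓ)
  have hB : 0 ≤ s * b ^ ℓ := mul_nonneg hs (Real.rpow_nonneg hb.le ℓ)
  have hDa : (0:ℝ) < 1 + s * a ^ ℓ := by linarith
  have hDb : (0:ℝ) < 1 + s * b ^ ℓ := by linarith
  have hkey : s * a ^ ℓ - s * b ^ ℓ ≤ ℓ * ((a - b) / b) * (s * a ^ ℓ) := by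
    have h := rpow_sub_rpow_le hℓ hb hab
    nlinarith [Real.rpow_nonneg ha.le ℓ]
  have hid : (1 + s * b ^ ℓ)⁻¹ - (1 + s * a ^ ℓ)⁻¹
      = (s * a ^ ℓ - s * b ^ ℓ) / ((1 + s * b ^ ℓ) * (1 + s * a ^ ℓ)) := by
    field_simp
    ring
  rw [hid, div_le_iff₀ (by positivity)]
  have h1 : 0 ≤ ℓ * ((a - b) / b) :=
    mul_nonneg hℓ.le (div_nonneg (by linarith) hb.le)
  nlinarith [mul_nonneg h1 hB, mul_nonneg h1 (mul_nonneg hB hA)]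

lemma inv_diff_abs_le {ℓ s a b : ℝ} (hℓ : 0 < ℓ) (hs : 0 ≤ s) (ha : 0 < a) (hb : 0 < b) :
    |(1 + s * a ^ ℓ)⁻¹ - (1 + s * b ^ ℓ)⁻¹| ≤ ℓ * |a - b| / min a b := by
  rcases le_total b a with h | h
  · have h2 := inv_diff_le hℓ hs hb h
    have hmono : b ^ ℓ ≤ a ^ ℓ := Real.rpow_le_rpow hb.le h hℓ.le
    have hDa : (0:ℝ) < 1 + s * a ^ ℓ := by positivity
    have hDb : (0:ℝ) < 1 + s * b ^ ℓ := by positivity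
    have hdir : (1 + s * a ^ ℓ)⁻¹ ≤ (1 + s * b ^ ℓ)⁻¹ := by
      apply inv_anti₀ hDb
      have := mul_le_mul_of_nonneg_left hmono hs
      linarith
    rw [abs_of_nonpos (by linarith), min_eq_right h, abs_of_nonneg (by linarith)]
    calc -((1 + s * a ^ ℓ)⁻¹ - (1 + s * b ^ ℓ)⁻¹)
        = (1 + s * b ^ ℓ)⁻¹ - (1 + s * a ^ ℓ)⁻¹ := by ring
      _ ≤ ℓ * ((a - b) / b) := h2
      _ = ℓ * (a - b) / b := by ring
  · have h2 := inv_diff_le hℓ hs ha h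
    have hmono : a ^ ℓ ≤ b ^ ℓ := Real.rpow_le_rpow ha.le h hℓ.le
    have hDa : (0:ℝ) < 1 + s * a ^ ℓ := by positivity
    have hDb : (0:ℝ) < 1 + s * b ^ ℓ := by positivity
    have hdir : (1 + s * b ^ ℓ)⁻¹ ≤ (1 + s * a ^ ℓ)⁻¹ := by
      apply inv_anti₀ hDa
      have := mul_le_mul_of_nonneg_left hmono hs
      linarith
    rw [abs_of_nonneg (by linarith), min_eq_left h, abs_of_nonpos (by linarith)]
    calc (1 + s * a ^ ℓ)⁻¹ - (1 + s * b ^ ℓ)⁻¹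
        ≤ ℓ * ((b - a) / a) := h2
      _ = ℓ * -(a - b) / a := by ring

/-- main estimate: `(1+b)·|h(a)−h(b)| ≤ C₂(s + |a−b|)`. -/
lemma main_est {ℓ s a b : ℝ} (hℓ : 0 < ℓ) (hs : 0 < s) (ha : 0 ≤ a) (hb : 0 ≤ b) :
    (1 + b) * |(1 + s * a ^ ℓ)⁻¹ - (1 + s * b ^ ℓ)⁻¹| ≤
      (6 * (2:ℝ) ^ ℓ + 4 + 4 * ℓ) * (s + |a - b|) := by
  set d := |a - b| with hd
  have hd0 : 0 ≤ d := abs_nonneg _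
  have hA : 0 ≤ s * a ^ ℓ := mul_nonneg hs.le (Real.rpow_nonneg ha ℓ)
  have hB : 0 ≤ s * b ^ ℓ := mul_nonneg hs.le (Real.rpow_nonneg hb ℓ)
  have hDa : (0:ℝ) < 1 + s * a ^ ℓ := by linarith
  have hDb : (0:ℝ) < 1 + s * b ^ ℓ := by linarith
  have hinva1 : (1 + s * a ^ ℓ)⁻¹ ≤ 1 := inv_le_one_of_one_le₀ (by linarith)
  have hinvb1 : (1 + s * b ^ ℓ)⁻¹ ≤ 1 := inv_le_one_of_one_le₀ (by linarith)
  have hinva0 : 0 < (1 + s * a ^ ℓ)⁻¹ := inv_pos.mpr hDa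
  have hinvb0 : 0 < (1 + s * b ^ ℓ)⁻¹ := inv_pos.mpr hDb
  have h2pos : (0:ℝ) < (2:ℝ) ^ ℓ := Real.rpow_pos_of_pos (by norm_num) ℓ
  have hdiff1 : |(1 + s * a ^ ℓ)⁻¹ - (1 + s * b ^ ℓ)⁻¹| ≤ 1 := by
    rw [abs_sub_le_iff]; constructor <;> linarith
  have hda : a - b ≤ d := le_abs_self _
  have hdb : b - a ≤ d := by rw [hd, abs_sub_comm]; exact le_abs_self _
  by_cases hI : a ≤ 2 ∧ b ≤ 2
  · -- both small: diff ≤ s (a^ℓ + b^ℓ) ≤ 2 s 2^ℓ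
    obtain ⟨ha2, hb2⟩ := hI
    have haℓ : a ^ ℓ ≤ (2:ℝ) ^ ℓ := Real.rpow_le_rpow ha ha2 hℓ.le
    have hbℓ : b ^ ℓ ≤ (2:ℝ) ^ ℓ := Real.rpow_le_rpow hb hb2 hℓ.le
    have hsmall : |(1 + s * a ^ ℓ)⁻¹ - (1 + s * b ^ ℓ)⁻¹| ≤ s * a ^ ℓ + s * b ^ ℓ := by
      have e1 : 1 - (1 + s * a ^ ℓ)⁻¹ = (s * a ^ ℓ) * (1 + s * a ^ ℓ)⁻¹ := by
        field_simp
        ring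
      have e2 : 1 - (1 + s * b ^ ℓ)⁻¹ = (s * b ^ ℓ) * (1 + s * b ^ ℓ)⁻¹ := by
        field_simp
        ring
      have f1 : 1 - (1 + s * a ^ ℓ)⁻¹ ≤ s * a ^ ℓ := by
        rw [e1]
        calc (s * a ^ ℓ) * (1 + s * a ^ ℓ)⁻¹ ≤ (s * a ^ ℓ) * 1 :=
          mul_le_mul_of_nonneg_left hinva1 hA
          _ = s * a ^ ℓ := mul_one _
      have f2 : 1 - (1 + s * b ^ ℓ)⁻¹ ≤ s * b ^ ℓ := by
        rw [e2]
        calc (s * b ^ ℓ) * (1 + s * b ^ ℓ)⁻¹ ≤ (s * b ^ ℓ) * 1 :=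
          mul_le_mul_of_nonneg_left hinvb1 hB
          _ = s * b ^ ℓ := mul_one _
      rw [abs_sub_le_iff]; constructor <;> linarith
    have hsum : s * a ^ ℓ + s * b ^ ℓ ≤ 2 * s * (2:ℝ) ^ ℓ := by nlinarith
    have h1b : 1 + b ≤ 3 := by linarith
    calc (1 + b) * |(1 + s * a ^ ℓ)⁻¹ - (1 + s * b ^ ℓ)⁻¹|
        ≤ 3 * (2 * s * (2:ℝ) ^ ℓ) := by
          apply mul_le_mul h1b (hsmall.trans hsum) (abs_nonneg _) (by norm_num)
      _ = 6 * (2:ℝ) ^ ℓ * s := by ring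
      _ ≤ (6 * (2:ℝ) ^ ℓ + 4 + 4 * ℓ) * (s + d) := by nlinarith
  · push_neg at hI
    rcases le_or_gt b (2 * d) with hb2d | hb2d
    · -- case II.a : d is large
      have hdlarge : (2:ℝ)/3 ≤ d := by
        rcases le_or_gt a 2 with ha2 | ha2
        · have hb2 := hI ha2
          linarith
        · -- a > 2, a ≤ b + d ≤ 3d
          linarith
      calc (1 + b) * |(1 + s * a ^ ℓ)⁻¹ - (1 + s * b ^ ℓ)⁻¹|
          ≤ (1 + 2 * d) * 1 := by
            apply mul_le_mul (by linarith) hdiff1 (abs_nonneg _) (by linarith)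
        _ ≤ 4 * d := by linarith
        _ ≤ (6 * (2:ℝ) ^ ℓ + 4 + 4 * ℓ) * (s + d) := by nlinarith
    · -- case II.b : b > 2d
      have hbpos : 0 < b := by linarith
      have hapos : 0 < a := by linarith  -- a ≥ b - d > d ≥ 0... check
      have hb1 : 1 ≤ b := by
        by_contra hb1
        push_neg at hb1
        rcases le_or_gt a 2 with ha2 | ha2
        · exact absurd (hI ha2) (by linarith)
        · linarith
      have hmin : b / 2 ≤ min a b := by
        rcases min_cases a b with ⟨hm, _⟩ | ⟨hm, _⟩ <;> rw [hm] <;> linarith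
      have hk := inv_diff_abs_le hℓ hs.le hapos hbpos
      have hk2 : ℓ * d / min a b ≤ ℓ * d / (b / 2) := by
        apply div_le_div_of_nonneg_left (by positivity) (by linarith) hmin
      have hk3 : ℓ * d / (b / 2) = 2 * ℓ * d / b := by ring
      have hfinal : (1 + b) * |(1 + s * a ^ ℓ)⁻¹ - (1 + s * b ^ ℓ)⁻¹| ≤ 4 * ℓ * d := by
        calc (1 + b) * |(1 + s * a ^ ℓ)⁻¹ - (1 + s * b ^ ℓ)⁻¹|
            ≤ (2 * b) * (2 * ℓ * d / b) := by
              apply mul_le_mul (by linarith) (by rw [← hk3]; exact hk.trans hk2)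
                (abs_nonneg _) (by linarith)
          _ = 4 * ℓ * d := by field_simp; ring
      calc (1 + b) * |(1 + s * a ^ ℓ)⁻¹ - (1 + s * b ^ ℓ)⁻¹| ≤ 4 * ℓ * d := hfinal
        _ ≤ (6 * (2:ℝ) ^ ℓ + 4 + 4 * ℓ) * (s + d) := by nlinarith

set_option maxHeartbeats 1000000 in
theorem stmt_15 (ℓμ ℓσ : ℝ) (hℓμ : 0 < ℓμ) (hℓσ0 : 0 ≤ ℓσ) (hℓσ : ℓσ ≤ ℓμ / 2)
    (σ : ℝ → ℝ)
    (c : ℝ) (hc : 0 < c)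
    (hA3 : ∀ x y : ℝ, |σ x - σ y| ≤ c * (1 + |x| ^ ℓσ + |y| ^ ℓσ) * |x - y|) :
    ∃ c' : ℝ, 0 < c' ∧ ∀ n : ℕ, 1 ≤ n → ∀ x y : ℝ,
      |tame σ ℓμ n x - tame σ ℓμ n y| ≤
        c' * (1 + |x| ^ ℓσ + |y| ^ ℓσ) * (1 / Real.sqrt (n : ℝ) + |x - y|) := by
  have h2pos : (0:ℝ) < (2:ℝ) ^ ℓμ := Real.rpow_pos_of_pos (by norm_num) ℓμ
  set C₁ : ℝ := |σ 0| + 2 * c with hC₁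
  set C₂ : ℝ := 6 * (2:ℝ) ^ ℓμ + 4 + 4 * ℓμ with hC₂
  have hC₁pos : 0 < C₁ := by positivity
  have hC₂pos : 0 < C₂ := by positivity
  refine ⟨c + C₁ * C₂, by positivity, ?_⟩
  intro n hn x y
  have hnpos : (0:ℝ) < (n:ℝ) := by exact_mod_cast Nat.lt_of_lt_of_le Nat.zero_lt_one hn
  have hsn : 0 < Real.sqrt n := Real.sqrt_pos.mpr hnpos
  set s : ℝ := 1 / Real.sqrt n with hsdef
  have hs : 0 < s := by positivity
  have ha0 : (0:ℝ) ≤ |x| := abs_nonneg _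
  have hb0 : (0:ℝ) ≤ |y| := abs_nonneg _
  have hX0 : (0:ℝ) ≤ |x| ^ ℓσ := Real.rpow_nonneg ha0 _
  have hY0 : (0:ℝ) ≤ |y| ^ ℓσ := Real.rpow_nonneg hb0 _
  have hAx : 0 ≤ s * |x| ^ ℓμ := mul_nonneg hs.le (Real.rpow_nonneg ha0 _)
  have hAy : 0 ≤ s * |y| ^ ℓμ := mul_nonneg hs.le (Real.rpow_nonneg hb0 _)
  have hDa : (0:ℝ) < 1 + s * |x| ^ ℓμ := by linarith
  have hDb : (0:ℝ) < 1 + s * |y| ^ ℓμ := by linarith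
  have hinva1 : (1 + s * |x| ^ ℓμ)⁻¹ ≤ 1 := inv_le_one_of_one_le₀ (by linarith)
  have hinva0 : 0 < (1 + s * |x| ^ ℓμ)⁻¹ := inv_pos.mpr hDa
  -- decomposition
  have hdecomp : tame σ ℓμ n x - tame σ ℓμ n y
      = (σ x - σ y) * (1 + s * |x| ^ ℓμ)⁻¹
        + σ y * ((1 + s * |x| ^ ℓμ)⁻¹ - (1 + s * |y| ^ ℓμ)⁻¹) := by
    simp only [tame, ← hsdef]
    field_simp
    ring
  -- term 1
  have h1 : |(σ x - σ y) * (1 + s * |x| ^ ℓμ)⁻¹|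
      ≤ c * (1 + |x| ^ ℓσ + |y| ^ ℓσ) * |x - y| := by
    rw [abs_mul, abs_of_pos hinva0]
    calc |σ x - σ y| * (1 + s * |x| ^ ℓμ)⁻¹ ≤ |σ x - σ y| * 1 :=
        mul_le_mul_of_nonneg_left hinva1 (abs_nonneg _)
      _ = |σ x - σ y| := mul_one _
      _ ≤ c * (1 + |x| ^ ℓσ + |y| ^ ℓσ) * |x - y| := hA3 x y
  -- bound on |σ y|
  have hσy : |σ y| ≤ C₁ * (1 + |y| ^ ℓσ) * (1 + |y|) := by
    have h := hA3 y 0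
    have h0 : |(0:ℝ)| ^ ℓσ ≤ 1 := by
      rw [abs_zero]
      rcases eq_or_lt_of_le hℓσ0 with h' | h'
      · rw [← h', Real.rpow_zero]
      · rw [Real.zero_rpow (ne_of_gt h')]; norm_num
    have hy0 : |y - 0| = |y| := by rw [sub_zero]
    rw [hy0] at h
    have hσ : |σ y| ≤ |σ 0| + c * (1 + |y| ^ ℓσ + |0| ^ ℓσ) * |y| := by
      have := abs_sub_abs_le_abs_sub (σ y) (σ 0)
      linarith
    have hc1 : c * (1 + |y| ^ ℓσ + |0| ^ ℓσ) * |y| ≤ 2 * c * (1 + |y| ^ ℓσ) * |y| := by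
      nlinarith [mul_nonneg (mul_nonneg hc.le hb0)
        (show (0:ℝ) ≤ 1 + |y| ^ ℓσ - |0| ^ ℓσ by linarith)]
    rw [hC₁]
    have e2 : 1 ≤ (1 + |y| ^ ℓσ) * (1 + |y|) := by nlinarith [mul_nonneg hY0 hb0]
    have k1 : |σ 0| ≤ |σ 0| * ((1 + |y| ^ ℓσ) * (1 + |y|)) :=
      le_mul_of_one_le_right (abs_nonneg _) e2
    have k2 : (0:ℝ) ≤ 2 * c * (1 + |y| ^ ℓσ) := by positivity
    calc |σ y| ≤ |σ 0| + 2 * c * (1 + |y| ^ ℓσ) * |y| := by linarith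
      _ ≤ |σ 0| * ((1 + |y| ^ ℓσ) * (1 + |y|)) + 2 * c * (1 + |y| ^ ℓσ)
          + 2 * c * (1 + |y| ^ ℓσ) * |y| := by linarith
      _ = (|σ 0| + 2 * c) * (1 + |y| ^ ℓσ) * (1 + |y|) := by ring
  -- term 2 via main_est
  have hmain := main_est hℓμ hs ha0 hb0
  have habd : abs (|x| - |y|) ≤ |x - y| := abs_abs_sub_abs_le_abs_sub x y
  set E : ℝ := (1 + s * |x| ^ ℓμ)⁻¹ - (1 + s * |y| ^ ℓμ)⁻¹ with hE
  have h2 : |σ y * E| ≤ C₁ * C₂ * (1 + |x| ^ ℓσ + |y| ^ ℓσ) * (s + |x - y|) := by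
    rw [abs_mul]
    have step1 : |σ y| * |E| ≤ (C₁ * (1 + |y| ^ ℓσ)) * ((1 + |y|) * |E|) := by
      have h := mul_le_mul_of_nonneg_right hσy (abs_nonneg E)
      exact le_of_le_of_eq h (by ring)
    have step2 : (1 + |y|) * |E| ≤ C₂ * (s + |x - y|) := by
      refine hmain.trans ?_
      apply mul_le_mul_of_nonneg_left _ hC₂pos.le
      linarith
    calc |σ y| * |E|
        ≤ (C₁ * (1 + |y| ^ ℓσ)) * (C₂ * (s + |x - y|)) := by
          refine step1.trans ?_
          apply mul_le_mul_of_nonneg_left step2 (by positivity)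
      _ ≤ C₁ * C₂ * (1 + |x| ^ ℓσ + |y| ^ ℓσ) * (s + |x - y|) := by
          have hsd : 0 ≤ s + |x - y| := by positivity
          nlinarith [mul_nonneg (mul_nonneg hC₁pos.le hC₂pos.le) (mul_nonneg hX0 hsd)]
  -- combine
  rw [hdecomp]
  calc |(σ x - σ y) * (1 + s * |x| ^ ℓμ)⁻¹ + σ y * E|
      ≤ |(σ x - σ y) * (1 + s * |x| ^ ℓμ)⁻¹| + |σ y * E| := abs_add_le _ _
    _ ≤ c * (1 + |x| ^ ℓσ + |y| ^ ℓσ) * |x - y|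
        + C₁ * C₂ * (1 + |x| ^ ℓσ + |y| ^ ℓσ) * (s + |x - y|) := add_le_add h1 h2
    _ ≤ (c + C₁ * C₂) * (1 + |x| ^ ℓσ + |y| ^ ℓσ) * (s + |x - y|) := by
        nlinarith [mul_nonneg hc.le (mul_nonneg
          (by linarith : (0:ℝ) ≤ 1 + |x| ^ ℓσ + |y| ^ ℓσ) hs.le)]
    _ = (c + C₁ * C₂) * (1 + |x| ^ ℓσ + |y| ^ ℓσ) * (1 / Real.sqrt n + |x - y|) := by
        rw [hsdef]
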